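/- Fix integers $k' > k \ge 1$ and Hermitian matrices $\Phi_I, \Phi_V$ on $\mathbb{C}^n \otimes \mathbb{C}^n$ with $\Phi_V = V \Phi_I$ ($V$ the swap). Define $\Phi_I' = \frac{k(kk'-1)}{k'(k'^2-1)} \Phi_I + \frac{k(k'-k)}{k'(k'^2-1)} \Phi_V$ and $\Phi_V' = V \Phi_I'$. Then $k'^2 \Phi_I' + k' \Phi_V' = k^2 \Phi_I + k \Phi_V$, and moreover $\Phi_I' + \Phi_V' = \frac{k(k+1)}{k'(k'+1)}(\Phi_I + \Phi_V)$ and $\Phi_I' - \Phi_V' = \frac{k(k-1)}{k'(k'-1)}(\Phi_I - \Phi_V)$; in particular, if $\Phi_I \pm \Phi_V \ge 0$ then $\Phi_I' \pm \Phi_V' \ge 0$. -/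

import Mathlib

open Matrix ComplexOrder

/-- The swap operator on `ℂ^n ⊗ ℂ^n`, as a matrix. -/
def swapOp (n : ℕ) : Matrix (Fin n × Fin n) (Fin n × Fin n) ℂ :=
  Matrix.of fun p q => if p.1 = q.2 ∧ p.2 = q.1 then 1 else 0

lemma swapOp_mul_self (n : ℕ) : swapOp n * swapOp n = 1 := by
  ext ⟨p1, p2⟩ ⟨q1, q2⟩
  simp only [swapOp, Matrix.mul_apply, Matrix.of_apply, Matrix.one_apply,
    mul_ite, ite_mul, one_mul, mul_one, zero_mul, mul_zero, Fintype.sum_prod_type]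
  rw [Finset.sum_eq_single q2, Finset.sum_eq_single q1]
  · simp [Prod.ext_iff, and_comm]
  · intro r hr hne; simp [Ne.symm hne]; tauto
  · intro h; exact absurd (Finset.mem_univ _) h
  · intro r hr hne
    apply Finset.sum_eq_zero
    intro s hs
    simp [Ne.symm hne]; tauto
  · intro h; exact absurd (Finset.mem_univ _) h

lemma smul_posSemidef {m : Type*} [Fintype m] [DecidableEq m] {c : ℂ} (hc : 0 ≤ c)
    {M : Matrix m m ℂ} (hM : M.PosSemidef) : (c • M).PosSemidef := by
  refine Matrix.PosSemidef.of_dotProduct_mulVec_nonneg ?_ ?_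
  · have hcs : star c = c := by
      rw [Complex.star_def, Complex.conj_eq_iff_im]
      exact ((Complex.le_def.mp hc).2).symm
    rw [Matrix.IsHermitian, Matrix.conjTranspose_smul, hcs, hM.1]
  · intro x
    have := hM.dotProduct_mulVec_nonneg x
    calc (0 : ℂ) = c * 0 := by ring
    _ ≤ c * (star x ⬝ᵥ M.mulVec x) := by
      exact mul_le_mul_of_nonneg_left this hc
    _ = star x ⬝ᵥ (c • M).mulVec x := by
      simp [Matrix.smul_mulVec, dotProduct_smul]

theorem stmt_18 (n k k' : ℕ) (hk : 1 ≤ k) (hkk' : k < k')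
    (ΦI ΦV : Matrix (Fin n × Fin n) (Fin n × Fin n) ℂ)
    (hI : ΦI.IsHermitian) (hV : ΦV.IsHermitian)
    (hVdef : ΦV = swapOp n * ΦI) :
    let ΦI' : Matrix (Fin n × Fin n) (Fin n × Fin n) ℂ :=
      (((k : ℂ) * ((k : ℂ) * (k' : ℂ) - 1)) / ((k' : ℂ) * ((k' : ℂ) ^ 2 - 1))) • ΦI +
        (((k : ℂ) * ((k' : ℂ) - (k : ℂ))) / ((k' : ℂ) * ((k' : ℂ) ^ 2 - 1))) • ΦV
    let ΦV' : Matrix (Fin n × Fin n) (Fin n × Fin n) ℂ := swapOp n * ΦI'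
    ((k' : ℂ) ^ 2) • ΦI' + (k' : ℂ) • ΦV' = ((k : ℂ) ^ 2) • ΦI + (k : ℂ) • ΦV ∧
    ΦI' + ΦV' = (((k : ℂ) * ((k : ℂ) + 1)) / ((k' : ℂ) * ((k' : ℂ) + 1))) • (ΦI + ΦV) ∧
    ΦI' - ΦV' = (((k : ℂ) * ((k : ℂ) - 1)) / ((k' : ℂ) * ((k' : ℂ) - 1))) • (ΦI - ΦV) ∧
    ((ΦI + ΦV).PosSemidef → (ΦI' + ΦV').PosSemidef) ∧
    ((ΦI - ΦV).PosSemidef → (ΦI' - ΦV').PosSemidef) := by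
  intro ΦI' ΦV'
  set a : ℂ := ((k : ℂ) * ((k : ℂ) * (k' : ℂ) - 1)) / ((k' : ℂ) * ((k' : ℂ) ^ 2 - 1)) with ha
  set b : ℂ := ((k : ℂ) * ((k' : ℂ) - (k : ℂ))) / ((k' : ℂ) * ((k' : ℂ) ^ 2 - 1)) with hb
  have hVI : swapOp n * ΦV = ΦI := by
    rw [hVdef, ← Matrix.mul_assoc, swapOp_mul_self, Matrix.one_mul]
  have hV' : ΦV' = a • ΦV + b • ΦI := by
    show swapOp n * ΦI' = _
    show swapOp n * (a • ΦI + b • ΦV) = _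
    rw [Matrix.mul_add, Matrix.mul_smul, Matrix.mul_smul, ← hVdef, hVI]
  have hI' : ΦI' = a • ΦI + b • ΦV := rfl
  -- numeric facts
  have hk2 : (2 : ℕ) ≤ k' := Nat.lt_of_le_of_lt hk hkk'
  have hkc : (1 : ℝ) ≤ (k : ℝ) := by exact_mod_cast hk
  have hk'c : (2 : ℝ) ≤ (k' : ℝ) := by exact_mod_cast hk2
  have hkk'c : (k : ℝ) < (k' : ℝ) := by exact_mod_cast hkk'
  have h1 : ((k' : ℂ)) ≠ 0 := by
    exact_mod_cast Nat.cast_ne_zero.mpr (by omega)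
  have h2 : ((k' : ℂ)) - 1 ≠ 0 := by
    intro h
    have : (k' : ℂ) = 1 := by linear_combination h
    have : (k' : ℕ) = 1 := by exact_mod_cast this
    omega
  have h3 : ((k' : ℂ)) + 1 ≠ 0 := by
    intro h
    have : (k' : ℂ) = -1 := by linear_combination h
    have : (k' : ℝ) = -1 := by exact_mod_cast this
    linarith
  have h4 : ((k' : ℂ)) ^ 2 - 1 ≠ 0 := by
    intro h
    have : ((k' : ℂ) - 1) * ((k' : ℂ) + 1) = 0 := by linear_combination h
    rcases mul_eq_zero.mp this with h' | h'
    · exact h2 h'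
    · exact h3 h'
  have hsum : a + b = ((k : ℂ) * ((k : ℂ) + 1)) / ((k' : ℂ) * ((k' : ℂ) + 1)) := by
    rw [ha, hb]
    have : (k' : ℂ) ^ 2 - 1 = ((k' : ℂ) - 1) * ((k' : ℂ) + 1) := by ring
    rw [this]
    field_simp
    ring
  have hdiff : a - b = ((k : ℂ) * ((k : ℂ) - 1)) / ((k' : ℂ) * ((k' : ℂ) - 1)) := by
    rw [ha, hb]
    have : (k' : ℂ) ^ 2 - 1 = ((k' : ℂ) - 1) * ((k' : ℂ) + 1) := by ring
    rw [this]
    field_simp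
    ring
  have hA : ((k' : ℂ) ^ 2) * a + (k' : ℂ) * b = (k : ℂ) ^ 2 := by
    rw [ha, hb]
    field_simp [h4]
    ring
  have hB : ((k' : ℂ) ^ 2) * b + (k' : ℂ) * a = (k : ℂ) := by
    rw [ha, hb]
    field_simp [h4]
    ring
  refine ⟨?_, ?_, ?_, ?_, ?_⟩
  · rw [hI', hV']
    rw [show ((k' : ℂ) ^ 2) • (a • ΦI + b • ΦV) + (k' : ℂ) • (a • ΦV + b • ΦI)
        = (((k' : ℂ) ^ 2) * a + (k' : ℂ) * b) • ΦI + (((k' : ℂ) ^ 2) * b + (k' : ℂ) * a) • ΦV by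
      simp [smul_add, smul_smul, add_smul]; abel, hA, hB]
  · rw [hI', hV', ← hsum]
    simp [smul_add, add_smul]; abel
  · rw [hI', hV', ← hdiff]
    simp [smul_sub, sub_smul, smul_add, add_smul]; abel
  · intro hpsd
    have : ΦI' + ΦV' = (a + b) • (ΦI + ΦV) := by
      rw [hI', hV']; simp [smul_add, add_smul]; abel
    rw [this]
    apply smul_posSemidef _ hpsd
    rw [hsum]
    have heq : (((k : ℂ) * ((k : ℂ) + 1)) / ((k' : ℂ) * ((k' : ℂ) + 1))) =
        ((((k : ℝ) * ((k : ℝ) + 1)) / ((k' : ℝ) * ((k' : ℝ) + 1)) : ℝ) : ℂ) := by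
      push_cast; ring
    rw [heq]
    exact Complex.zero_le_real.mpr (by positivity)
  · intro hpsd
    have : ΦI' - ΦV' = (a - b) • (ΦI - ΦV) := by
      rw [hI', hV']; simp [smul_sub, sub_smul]; abel
    rw [this]
    apply smul_posSemidef _ hpsd
    rw [hdiff]
    have heq : (((k : ℂ) * ((k : ℂ) - 1)) / ((k' : ℂ) * ((k' : ℂ) - 1))) =
        ((((k : ℝ) * ((k : ℝ) - 1)) / ((k' : ℝ) * ((k' : ℝ) - 1)) : ℝ) : ℂ) := by
      push_cast; ring
    rw [heq]
    refine Complex.zero_le_real.mpr (div_nonneg (by nlinarith) (by nlinarith))
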